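/- Let M : Matrix (Fin n) (Fin n) ℂ be positive semidefinite (so its diagonal entries are real and nonnegative). If ∑_{i,j} ‖M_{ij}‖² = (∑ᵢ Re(M_{ii}))², then ‖M_{ij}‖² = Re(M_{ii})·Re(M_{jj}) for all i, j. -/

import Mathlib

open Matrix ComplexOrder

/-- If `M` is a positive semidefinite complex matrix and
`∑_{i,j} ‖M_{ij}‖² = (∑ᵢ Re M_{ii})²`, then `‖M_{ij}‖² = Re(M_{ii})·Re(M_{jj})`
for all `i, j`. -/
theorem posSemidef_sq_norm_entries_eq {n : ℕ}
    (M : Matrix (Fin n) (Fin n) ℂ) (hM : M.PosSemidef)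
    (h : ∑ i, ∑ j, ‖M i j‖ ^ 2 = (∑ i, (M i i).re) ^ 2) :
    ∀ i j, ‖M i j‖ ^ 2 = (M i i).re * (M j j).re := by
  classical
  obtain ⟨S, hSherm0, hSM⟩ : ∃ S : Matrix (Fin n) (Fin n) ℂ, S.IsHermitian ∧ S * S = M := by
    open scoped MatrixOrder in
    exact ⟨CFC.sqrt M, (CFC.sqrt_nonneg M).posSemidef.isHermitian,
      CFC.sqrt_mul_sqrt_self M hM.nonneg⟩
  have hSherm : S.IsHermitian := hSherm0
  -- columns of S as vectors in EuclideanSpace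
  let u : Fin n → EuclideanSpace ℂ (Fin n) := fun i => WithLp.toLp 2 (fun k => S k i)
  have hinner : ∀ i j, (inner ℂ (u i) (u j) : ℂ) = M i j := by
    intro i j
    have hm : M i j = ∑ k, S i k * S k j := by
      rw [← hSM]; rfl
    rw [hm]
    simp only [EuclideanSpace.inner_eq_star_dotProduct]
    simp [dotProduct, u, mul_comm]
    refine Finset.sum_congr rfl fun k _ => ?_
    rw [← hSherm.apply i k]
    simp [Matrix.conjTranspose_apply, mul_comm]
  have hdiag : ∀ i, (M i i).re = ‖u i‖ ^ 2 := by
    intro i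
    rw [← hinner i i]; exact inner_self_eq_norm_sq (𝕜 := ℂ) (u i)
  have key : ∀ i j, ‖M i j‖ ^ 2 ≤ (M i i).re * (M j j).re := by
    intro i j
    rw [hdiag, hdiag, ← hinner i j]
    calc ‖(inner ℂ (u i) (u j) : ℂ)‖ ^ 2 ≤ (‖u i‖ * ‖u j‖) ^ 2 := by
          gcongr; exact norm_inner_le_norm _ _
      _ = ‖u i‖ ^ 2 * ‖u j‖ ^ 2 := by ring
  -- sum of RHS equals the square of the trace
  have hsum : ∑ i, ∑ j, (M i i).re * (M j j).re = (∑ i, (M i i).re) ^ 2 := by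
    rw [sq, Finset.sum_mul_sum]
  have h' : ∑ p : Fin n × Fin n, ‖M p.1 p.2‖ ^ 2
      = ∑ p : Fin n × Fin n, (M p.1 p.1).re * (M p.2 p.2).re := by
    rw [Fintype.sum_prod_type, Fintype.sum_prod_type, h, ← hsum]
  have := (Finset.sum_eq_sum_iff_of_le (s := Finset.univ)
      (f := fun p : Fin n × Fin n => ‖M p.1 p.2‖ ^ 2)
      (g := fun p => (M p.1 p.1).re * (M p.2 p.2).re)
      (fun p _ => key p.1 p.2)).mp h'
  intro i j
  exact this (i, j) (Finset.mem_univ _)
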